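/- Let N ⊂ k[x₁,x₂,x₃] be the escalier of a stable monomial ideal J with |N| = p, and for 0 ≤ i, 0 ≤ j let ρ_{i+1,j+1} = |{a : x₁ᵃx₂ʲx₃ⁱ ∈ N}|. Then the nonzero values ρ_{i,j} form a plane partition that is strictly decreasing along rows and strictly decreasing down columns: ρ_{i,j} > ρ_{i,j+1} whenever ρ_{i,j+1} > 0, and ρ_{i,j} > ρ_{i+1,j} whenever ρ_{i+1,j} > 0, and the total sum of all ρ_{i,j} equals p. -/
import Mathlib


def MonomialIdeal {n : ℕ} (I : Set (Fin n → ℕ)) : Prop :=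
  ∀ τ ∈ I, ∀ σ : Fin n → ℕ, τ + σ ∈ I

def IsStable {n : ℕ} (I : Set (Fin n → ℕ)) : Prop :=
  ∀ τ ∈ I, ∀ m j : Fin n, τ m ≠ 0 → (∀ l, l < m → τ l = 0) → m < j →
    τ - Pi.single m 1 + Pi.single j 1 ∈ I

/-- The monomial `x₁^a x₂^b x₃^c` of `k[x₁,x₂,x₃]`, as an exponent vector. -/
def mon3 (a b c : ℕ) : Fin 3 → ℕ := ![a, b, c]

lemma mem_iff_lt_ncard {S : Set ℕ} (hf : S.Finite) (hd : ∀ a ∈ S, ∀ b ≤ a, b ∈ S) (a : ℕ) :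
    a ∈ S ↔ a < S.ncard := by
  constructor
  · intro ha
    have h1 : Set.Iic a ⊆ S := fun b hb => hd a ha b hb
    have h2 := Set.ncard_le_ncard h1 hf
    have h3 : (Set.Iic a).ncard = a + 1 := by simp [Set.ncard_eq_toFinset_card']
    omega
  · intro ha
    by_contra h
    have hsub : S ⊆ Set.Iio a := by
      intro b hb
      simp only [Set.mem_Iio]
      by_contra hba
      push_neg at hba
      exact h (hd b hb a hba)
    have h2 := Set.ncard_le_ncard hsub (Set.finite_Iio a)
    have h3 : (Set.Iio a).ncard = a := by simp [Set.ncard_eq_toFinset_card']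
    omega

section Main
variable (J : Set (Fin 3 → ℕ)) (hJ : MonomialIdeal J)
  (hfin : {τ : Fin 3 → ℕ | τ ∉ J}.Finite)

lemma down {J : Set (Fin 3 → ℕ)} (hJ : MonomialIdeal J) {σ τ : Fin 3 → ℕ}
    (h : τ ∉ J) (hle : σ ≤ τ) : σ ∉ J := by
  intro hs
  have := hJ σ hs (τ - σ)
  rw [add_tsub_cancel_of_le hle] at this
  exact h this

lemma mon3_inj {j i : ℕ} : Function.Injective (fun a => mon3 a j i) := by
  intro a b hab
  have := congrFun hab 0
  simpa [mon3] using this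

lemma key {J : Set (Fin 3 → ℕ)} (hJ : MonomialIdeal J)
    (hfin : {τ : Fin 3 → ℕ | τ ∉ J}.Finite)
    (ρ : ℕ → ℕ → ℕ) (hρ : ∀ i j, ρ i j = Nat.card {a : ℕ | mon3 a j i ∉ J})
    (i j a : ℕ) : mon3 a j i ∉ J ↔ a < ρ i j := by
  set S : Set ℕ := {a : ℕ | mon3 a j i ∉ J} with hS
  have hSfin : S.Finite := by
    have : S = (fun a => mon3 a j i) ⁻¹' {τ : Fin 3 → ℕ | τ ∉ J} := rfl
    rw [this]
    exact Set.Finite.preimage (mon3_inj.injOn) hfin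
  have hd : ∀ a ∈ S, ∀ b ≤ a, b ∈ S := by
    intro a ha b hba
    refine down hJ ha ?_
    intro k
    fin_cases k <;> simp [mon3, hba]
  have := mem_iff_lt_ncard hSfin hd a
  rw [hρ i j, Nat.card_coe_set_eq]
  exact this

end Main

theorem stable_escalier_gives_strict_plane_partition
    (J : Set (Fin 3 → ℕ)) (hJ : MonomialIdeal J) (hst : IsStable J)
    (hfin : {τ : Fin 3 → ℕ | τ ∉ J}.Finite)
    (p : ℕ) (hp : Nat.card {τ : Fin 3 → ℕ | τ ∉ J} = p)
    (ρ : ℕ → ℕ → ℕ)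
    (hρ : ∀ i j, ρ i j = Nat.card {a : ℕ | mon3 a j i ∉ J}) :
    (∀ i j, 0 < ρ i (j + 1) → ρ i (j + 1) < ρ i j) ∧
    (∀ i j, 0 < ρ (i + 1) j → ρ (i + 1) j < ρ i j) ∧
    (∑ᶠ (i : ℕ) (j : ℕ), ρ i j = p) := by
  have hkey := key hJ hfin ρ hρ
  refine ⟨?_, ?_, ?_⟩
  · intro i j hpos
    set r := ρ i (j + 1) with hr
    have h1 : mon3 r j i ∉ J := by
      intro hmem
      have hst' := hst (mon3 r j i) hmem 0 1 (by simpa [mon3] using hpos.ne')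
        (by intro l hl; exact absurd hl (by simp)) (by decide)
      have heq : mon3 r j i - Pi.single 0 1 + Pi.single 1 1 = mon3 (r - 1) (j + 1) i := by
        funext k
        fin_cases k <;> simp [mon3, Pi.single_apply, Matrix.vecHead, Matrix.vecTail]
      rw [heq] at hst'
      exact (hkey i (j + 1) (r - 1)).mpr (by omega) hst'
    exact (hkey i j r).mp h1
  · intro i j hpos
    set r := ρ (i + 1) j with hr
    have h1 : mon3 r j i ∉ J := by
      intro hmem
      have hst' := hst (mon3 r j i) hmem 0 2 (by simpa [mon3] using hpos.ne')
        (by intro l hl; exact absurd hl (by simp)) (by decide)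
      have heq : mon3 r j i - Pi.single 0 1 + Pi.single 2 1 = mon3 (r - 1) j (i + 1) := by
        funext k
        fin_cases k <;> simp [mon3, Pi.single_apply, Matrix.vecHead, Matrix.vecTail]
      rw [heq] at hst'
      exact (hkey (i + 1) j (r - 1)).mpr (by omega) hst'
    exact (hkey i j r).mp h1
  · -- sum part
    classical
    set T : Finset (Fin 3 → ℕ) := hfin.toFinset with hT
    have hpT : T.card = p := by
      rw [← hp, Nat.card_eq_card_finite_toFinset hfin]
    obtain ⟨M, hbound⟩ : ∃ M, ∀ τ ∈ T, τ 1 < M ∧ τ 2 < M :=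
      ⟨T.sup (fun τ => max (τ 1) (τ 2)) + 1, fun τ hτ => by
        have := Finset.le_sup (f := fun τ => max (τ 1) (τ 2)) hτ
        exact ⟨Nat.lt_succ_of_le (le_trans (le_max_left _ _) this),
          Nat.lt_succ_of_le (le_trans (le_max_right _ _) this)⟩⟩
    have hfiber : ∀ i j, (T.filter (fun τ => (τ 2, τ 1) = (i, j))).card = ρ i j := by
      intro i j
      have himg : T.filter (fun τ => (τ 2, τ 1) = (i, j))
          = (Finset.range (ρ i j)).image (fun a => mon3 a j i) := by
        ext τ
        simp only [Finset.mem_filter, Finset.mem_image, Finset.mem_range, hT,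
          Set.Finite.mem_toFinset, Set.mem_setOf_eq, Prod.mk.injEq]
        constructor
        · rintro ⟨hτJ, h2, h1⟩
          refine ⟨τ 0, ?_, ?_⟩
          · have : mon3 (τ 0) j i = τ := by
              funext k; fin_cases k <;> simp [mon3, h1, h2]
            rw [← (hkey i j (τ 0))]
            rw [this]; exact hτJ
          · funext k; fin_cases k <;> simp [mon3, h1, h2]
        · rintro ⟨a, ha, rfl⟩
          exact ⟨(hkey i j a).mpr ha, rfl, rfl⟩
      rw [himg, Finset.card_image_of_injective _ mon3_inj, Finset.card_range]
    have hzero : ∀ i j, M ≤ i ∨ M ≤ j → ρ i j = 0 := by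
      intro i j h
      by_contra hne
      have : mon3 0 j i ∉ J := (hkey i j 0).mpr (Nat.pos_of_ne_zero hne)
      have hmem : mon3 0 j i ∈ T := by
        rw [hT, Set.Finite.mem_toFinset]; exact this
      have := hbound _ hmem
      simp [mon3] at this
      omega
    have hsum : ∑ i ∈ Finset.range M, ∑ j ∈ Finset.range M, ρ i j = p := by
      rw [← hpT]
      rw [Finset.card_eq_sum_card_fiberwise (f := fun τ => (τ 2, τ 1))
        (t := Finset.range M ×ˢ Finset.range M)
        (fun τ hτ => by simp [Finset.mem_product]; exact ⟨(hbound τ hτ).2, (hbound τ hτ).1⟩)]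
      rw [Finset.sum_product]
      exact Finset.sum_congr rfl fun i _ => Finset.sum_congr rfl fun j _ => (hfiber i j).symm
    have hinner : ∀ i, ∑ᶠ j, ρ i j = ∑ j ∈ Finset.range M, ρ i j := by
      intro i
      apply finsum_eq_finset_sum_of_support_subset
      intro j hj
      simp only [Function.mem_support] at hj
      simp only [Finset.coe_range, Set.mem_Iio]
      by_contra h
      exact hj (hzero i j (Or.inr (by omega)))
    rw [← hsum]
    rw [finsum_eq_finset_sum_of_support_subset _ (s := Finset.range M)]
    · exact Finset.sum_congr rfl fun i _ => hinner i
    · intro i hi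
      simp only [Function.mem_support, hinner i] at hi
      simp only [Finset.coe_range, Set.mem_Iio]
      by_contra h
      apply hi
      apply Finset.sum_eq_zero
      intro j _
      exact hzero i j (Or.inl (by omega))
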